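/- Let A, b, ε, V, v, d be real numbers with b > 0, A ≥ 0, ε ≥ 0, V ≥ 0, v ≥ 0, and set T = ε + (v + A·ε)/b. Let x : ℝ → ℝ satisfy x(0) = 0, with derivative x′(t) = v + A·t for all t ∈ [0, ε] and x′(t) = v + A·ε − b·(t − ε) for all t ∈ [ε, T]. Let o : ℝ → ℝ satisfy o(0) = d and be differentiable on [0, T] with |o′(t)| ≤ V for all t ∈ [0, T]. If d > (A/b + 1)·((A/2)·ε² + ε·v) + v²/(2b) + V·(ε + (v + A·ε)/b), then x(t) < o(t) for all t ∈ [0, T]. -/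

import Mathlib

/-- Passive safety of one DWA cycle: a robot accelerating at `A` for time `ε`
and then braking at rate `b` never reaches an obstacle starting at distance `d`
and moving with speed at most `V`, provided the safe-driving condition holds. -/
theorem dwa_cycle_passive_safety
    (A b ε V v d : ℝ) (hb : 0 < b) (hA : 0 ≤ A) (hε : 0 ≤ ε) (hV : 0 ≤ V)
    (hv : 0 ≤ v)
    (T : ℝ) (hT : T = ε + (v + A * ε) / b)
    (x : ℝ → ℝ) (hx0 : x 0 = 0)
    (hx1 : ∀ t ∈ Set.Icc (0 : ℝ) ε, HasDerivAt x (v + A * t) t)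
    (hx2 : ∀ t ∈ Set.Icc ε T, HasDerivAt x (v + A * ε - b * (t - ε)) t)
    (o : ℝ → ℝ) (o' : ℝ → ℝ) (ho0 : o 0 = d)
    (ho : ∀ t ∈ Set.Icc (0 : ℝ) T, HasDerivAt o (o' t) t)
    (ho' : ∀ t ∈ Set.Icc (0 : ℝ) T, |o' t| ≤ V)
    (hsafe : d > (A / b + 1) * ((A / 2) * ε ^ 2 + ε * v) + v ^ 2 / (2 * b)
        + V * (ε + (v + A * ε) / b)) :
    ∀ t ∈ Set.Icc (0 : ℝ) T, x t < o t := by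
  have hvA : 0 ≤ v + A * ε := by nlinarith
  have hεT : ε ≤ T := by
    rw [hT]
    have : 0 ≤ (v + A * ε) / b := div_nonneg hvA hb.le
    linarith
  have hT0 : (0:ℝ) ≤ T := le_trans hε hεT
  -- derivative of x everywhere on [0,T]
  have hderiv : ∀ t ∈ Set.Icc (0:ℝ) T,
      HasDerivAt x (if t ≤ ε then v + A * t else v + A * ε - b * (t - ε)) t := by
    intro t ht
    by_cases h : t ≤ ε
    · simpa [h] using hx1 t ⟨ht.1, h⟩
    · simp only [if_neg h]
      exact hx2 t ⟨(lt_of_not_ge h).le, ht.2⟩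
  have hcont : ContinuousOn x (Set.Icc 0 T) := fun t ht =>
    ((hderiv t ht).continuousAt).continuousWithinAt
  have hmono : MonotoneOn x (Set.Icc 0 T) := by
    apply monotoneOn_of_deriv_nonneg (convex_Icc 0 T) hcont
    · intro t ht
      rw [interior_Icc] at ht
      exact ((hderiv t (Set.Ioo_subset_Icc_self ht)).differentiableAt).differentiableWithinAt
    · intro t ht
      rw [interior_Icc] at ht
      rw [(hderiv t (Set.Ioo_subset_Icc_self ht)).deriv]
      by_cases h : t ≤ ε
      · simp only [if_pos h]; nlinarith [ht.1]
      · simp only [if_neg h]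
        have htT : t ≤ T := ht.2.le
        have : b * (t - ε) ≤ b * (T - ε) := by
          apply mul_le_mul_of_nonneg_left (by linarith) hb.le
        have hTe : b * (T - ε) = v + A * ε := by
          rw [hT]; field_simp; ring
        linarith
  -- value at ε
  have poly1 : ∀ t : ℝ, HasDerivAt (fun s => v * s + A / 2 * s ^ 2) (v + A * t) t := by
    intro t
    have p1 : HasDerivAt (fun s : ℝ => v * s) v t := by
      simpa using (hasDerivAt_id t).const_mul v
    have p2 : HasDerivAt (fun s : ℝ => A / 2 * s ^ 2) (A * t) t := by
      have := (hasDerivAt_pow 2 t).const_mul (A / 2)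
      exact this.congr_deriv (by ring)
    exact p1.add p2
  have hxε : x ε = v * ε + A / 2 * ε ^ 2 := by
    have key := constant_of_has_deriv_right_zero
      (f := fun t => x t - (v * t + A / 2 * t ^ 2)) (a := 0) (b := ε)
      (fun t ht => (((hx1 t ht).sub (poly1 t)).continuousAt).continuousWithinAt)
      (fun t ht => by
        have := (hx1 t ⟨ht.1, ht.2.le⟩).sub (poly1 t)
        simpa [Pi.sub_def] using this.hasDerivWithinAt)
      ε (Set.right_mem_Icc.mpr hε)
    simp [hx0] at key
    linarith
  -- value at T
  have poly2 : ∀ t : ℝ,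
      HasDerivAt (fun s => (v + A * ε) * (s - ε) - b / 2 * (s - ε) ^ 2)
        (v + A * ε - b * (t - ε)) t := by
    intro t
    have q0 : HasDerivAt (fun s : ℝ => s - ε) 1 t := (hasDerivAt_id t).sub_const ε
    have q1 : HasDerivAt (fun s : ℝ => (v + A * ε) * (s - ε)) (v + A * ε) t := by
      simpa using q0.const_mul (v + A * ε)
    have q2 : HasDerivAt (fun s : ℝ => b / 2 * (s - ε) ^ 2) (b * (t - ε)) t := by
      have := (q0.pow 2).const_mul (b / 2)
      exact this.congr_deriv (by ring)
    exact q1.sub q2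
  have hxT : x T = x ε + (v + A * ε) ^ 2 / (2 * b) := by
    have key := constant_of_has_deriv_right_zero
      (f := fun t => x t - ((v + A * ε) * (t - ε) - b / 2 * (t - ε) ^ 2)) (a := ε) (b := T)
      (fun t ht => (((hx2 t ht).sub (poly2 t)).continuousAt).continuousWithinAt)
      (fun t ht => by
        have := (hx2 t ⟨ht.1, ht.2.le⟩).sub (poly2 t)
        simpa [Pi.sub_def] using this.hasDerivWithinAt)
      T (Set.right_mem_Icc.mpr hεT)
    simp at key
    have hTe : T - ε = (v + A * ε) / b := by rw [hT]; ring
    rw [hTe] at key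
    have : (v + A * ε) * ((v + A * ε) / b) - b / 2 * ((v + A * ε) / b) ^ 2
        = (v + A * ε) ^ 2 / (2 * b) := by
      field_simp
      ring
    linarith
  -- final
  intro t ht
  have hxt : x t ≤ x T := hmono ht (Set.right_mem_Icc.mpr hT0) ht.2
  have hob : ‖o t - o 0‖ ≤ V * ‖t - 0‖ := by
    apply Convex.norm_image_sub_le_of_norm_hasDerivWithin_le
      (fun s hs => (ho s hs).hasDerivWithinAt)
      (fun s hs => by simpa using ho' s hs)
      (convex_Icc 0 T) (Set.left_mem_Icc.mpr hT0) ht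
  have hot : d - V * t ≤ o t := by
    rw [ho0, Real.norm_eq_abs, Real.norm_eq_abs, sub_zero, abs_of_nonneg ht.1] at hob
    have := (abs_le.mp hob).1
    linarith
  have hVt : V * t ≤ V * T := mul_le_mul_of_nonneg_left ht.2 hV
  have heq : x T = (A / b + 1) * ((A / 2) * ε ^ 2 + ε * v) + v ^ 2 / (2 * b) := by
    rw [hxT, hxε]
    field_simp
    ring
  rw [hT] at hVt
  linarith
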